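/- Let H be a t-saturating weighted graph with weight a_i at each vertex i. Then: (i) a_i < min{deg_H(i), ν(H) + 1} for every vertex i of H; and (ii) a_i ≥ 2 whenever i is adjacent to a leaf vertex of the base graph of H (a vertex adjacent to only one vertex of the graph). -/

import Mathlib

open MvPolynomial
open scoped Classical

noncomputable section

/-! ### Weighted graphs and matchings -/

/-- Number of times the vertex `v` appears in the multiset of edges `M`. -/
def edgeCount {α : Type*} (M : Multiset (Sym2 α)) (v : α) : ℕ :=
  Multiset.countP (fun e => v ∈ e) M

/-- A matching of the weighted graph `(G, w)`: a family of edges of `G` (with repetitions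
allowed) such that every vertex appears in these edges no more times than its weight.
Vertices of weight `0` are regarded as not belonging to the weighted graph. -/
def IsWMatching {α : Type*} (G : SimpleGraph α) (w : α → ℕ) (M : Multiset (Sym2 α)) : Prop :=
  (∀ e ∈ M, e ∈ G.edgeSet) ∧ ∀ v, edgeCount M v ≤ w v

/-- The matching number of the weighted graph `(G, w)`. -/
def nu {α : Type*} (G : SimpleGraph α) (w : α → ℕ) : ℕ :=
  sSup {m | ∃ M : Multiset (Sym2 α), IsWMatching G w M ∧ Multiset.card M = m}

/-- `deg_w(i) = Σ_{j ∈ N_w(i)} w j`, the sum of the weights of the neighbours of `i`. -/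
def wdeg {α : Type*} [Fintype α] (G : SimpleGraph α) (w : α → ℕ) (i : α) : ℕ :=
  ∑ j : α, if G.Adj i j then w j else 0

/-- The weighted graph obtained from `(G, w)` by deleting the (open) neighbourhood of `i`. -/
def delNbr {α : Type*} (G : SimpleGraph α) (w : α → ℕ) (i : α) : α → ℕ :=
  fun j => if G.Adj i j then 0 else w j

/-- The weighted graph obtained from `(G, w)` by deleting the vertices of `N`. -/
def delSet {α : Type*} (w : α → ℕ) (N : Set α) : α → ℕ :=
  fun j => if j ∈ N then 0 else w j

/-- A weighted graph `H = (G, w)` is `t`-saturating if `ν(H) < t` and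
`ν(H − N_H(i)) ≥ t − deg_H(i)` for every vertex `i` of `H`. -/
def TSaturating {α : Type*} [Fintype α] (G : SimpleGraph α) (w : α → ℕ) (t : ℕ) : Prop :=
  nu G w < t ∧ ∀ i, 0 < w i → t ≤ nu G (delNbr G w i) + wdeg G w i

/-- A weighted graph `H = (G, w)` is strongly `t`-saturating if `ν(H) < t` and
`ν(H − j) ≥ t − w j` for every vertex `j` of `H`. -/
def StronglyTSaturating {α : Type*} (G : SimpleGraph α) (w : α → ℕ) (t : ℕ) : Prop :=
  nu G w < t ∧ ∀ j, 0 < w j → t ≤ nu G (delSet w {j}) + w j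

/-! ### Covers, cores, neighbourhoods -/

/-- A (vertex) cover of a graph. -/
def IsVCover {α : Type*} (G : SimpleGraph α) (F : Set α) : Prop :=
  ∀ ⦃i j⦄, G.Adj i j → i ∈ F ∨ j ∈ F

/-- A minimal (vertex) cover of a graph. -/
def IsMinimalVCover {α : Type*} (G : SimpleGraph α) (F : Set α) : Prop :=
  IsVCover G F ∧ ∀ F', IsVCover G F' → F' ⊆ F → F' = F

/-- `core(F)`: the set of vertices of `F` which are not adjacent to any vertex outside `F`. -/
def graphCore {α : Type*} (G : SimpleGraph α) (F : Set α) : Set α :=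
  {i | i ∈ F ∧ ∀ j, G.Adj i j → j ∈ F}

/-- The closed neighbourhood `N[U]` of a set of vertices `U`. -/
def closedNbhd {α : Type*} (G : SimpleGraph α) (U : Set α) : Set α :=
  U ∪ {v | ∃ u ∈ U, G.Adj u v}

/-- `F` is minimal among the covers of `G` containing `S`. -/
def MinimalCoverOver {α : Type*} (G : SimpleGraph α) (S F : Set α) : Prop :=
  IsVCover G F ∧ S ⊆ F ∧ ∀ F', IsVCover G F' → S ⊆ F' → F' ⊆ F → F' = F

/-- `W` is a dominating set: every vertex outside `W` is adjacent to a vertex of `W`. -/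
def IsDominating {α : Type*} (G : SimpleGraph α) (W : Set α) : Prop :=
  ∀ v, v ∉ W → ∃ u ∈ W, G.Adj u v

/-- Every connected component of `H` contains an odd cycle of length at most `L`. -/
def ComponentOddCycleLe {β : Type*} (H : SimpleGraph β) (L : ℕ) : Prop :=
  ∀ c : H.ConnectedComponent, ∃ (v : β) (cyc : H.Walk v v),
    H.connectedComponentMk v = c ∧ cyc.IsCycle ∧ Odd cyc.length ∧ cyc.length ≤ L

/-- Every connected component of `H` contains an odd cycle. -/
def ComponentOddCycle {β : Type*} (H : SimpleGraph β) : Prop :=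
  ∀ c : H.ConnectedComponent, ∃ (v : β) (cyc : H.Walk v v),
    H.connectedComponentMk v = c ∧ cyc.IsCycle ∧ Odd cyc.length

/-! ### Edge ideals -/

/-- The edge ideal of a simple graph. -/
def edgeIdeal (k : Type*) [CommRing k] {σ : Type*} (G : SimpleGraph σ) :
    Ideal (MvPolynomial σ k) :=
  Ideal.span {p | ∃ i j, G.Adj i j ∧ p = X i * X j}

/-- The maximal homogeneous ideal `(x_1, …, x_n)`. -/
def maxIdeal (k : Type*) [CommRing k] (σ : Type*) : Ideal (MvPolynomial σ k) :=
  Ideal.span (Set.range (X : σ → MvPolynomial σ k))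

/-- `P_F`, the ideal generated by the variables `x_i`, `i ∈ F`. -/
def varIdeal (k : Type*) [CommRing k] {σ : Type*} (F : Set σ) : Ideal (MvPolynomial σ k) :=
  Ideal.span ((fun i => (X i : MvPolynomial σ k)) '' F)

/-- The monomial `x^a`. -/
def monom (k : Type*) [CommRing k] {n : ℕ} (a : Fin n → ℕ) : MvPolynomial (Fin n) k :=
  ∏ i : Fin n, (X i : MvPolynomial (Fin n) k) ^ a i

/-- `f` belongs to the saturation `J̃ = ⋃_{m ≥ 1} (J : 𝔪^m)` of `J`. -/
def inSaturation (k : Type*) [CommRing k] {σ : Type*} (J : Ideal (MvPolynomial σ k))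
    (f : MvPolynomial σ k) : Prop :=
  ∃ m : ℕ, f ∈ Submodule.colon J (((maxIdeal k σ) ^ m : Ideal (MvPolynomial σ k)) : Set (MvPolynomial σ k))

/-- `P` is an associated prime of the ideal `J`, i.e. of the module `R ⧸ J`. -/
def assocPrime {R : Type*} [CommRing R] (J P : Ideal R) : Prop :=
  P ∈ associatedPrimes R (R ⧸ J)

/-- `P` is an embedded associated prime of `J`: an associated prime of `R ⧸ J` which is
not a minimal prime of `J`. -/
def embeddedAssocPrime {R : Type*} [CommRing R] (J P : Ideal R) : Prop :=
  assocPrime J P ∧ P ∉ J.minimalPrimes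

/-- The five configurations appearing in the description of `Ass(I³)`: a triangle; a union
of an edge and a triangle meeting at exactly one vertex; a union of two vertex-disjoint
triangles with no edges between them; a union of two triangles meeting at exactly one
vertex; a pentagon. `W` is the vertex set of the subgraph. -/
def Config3 {α : Type*} (G : SimpleGraph α) (W : Set α) : Prop :=
  (∃ u v w : α, u ≠ v ∧ u ≠ w ∧ v ≠ w ∧ G.Adj u v ∧ G.Adj v w ∧ G.Adj u w ∧
    W = {u, v, w}) ∨
  (∃ i j h v : α, [i, j, h, v].Pairwise (· ≠ ·) ∧ G.Adj i j ∧ G.Adj j h ∧ G.Adj i h ∧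
    G.Adj i v ∧ W = {i, j, h, v}) ∨
  (∃ u₁ v₁ w₁ u₂ v₂ w₂ : α, [u₁, v₁, w₁, u₂, v₂, w₂].Pairwise (· ≠ ·) ∧
    G.Adj u₁ v₁ ∧ G.Adj v₁ w₁ ∧ G.Adj u₁ w₁ ∧ G.Adj u₂ v₂ ∧ G.Adj v₂ w₂ ∧ G.Adj u₂ w₂ ∧
    (∀ x ∈ ({u₁, v₁, w₁} : Set α), ∀ y ∈ ({u₂, v₂, w₂} : Set α), ¬ G.Adj x y) ∧
    W = {u₁, v₁, w₁, u₂, v₂, w₂}) ∨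
  (∃ i j h u v : α, [i, j, h, u, v].Pairwise (· ≠ ·) ∧
    G.Adj i j ∧ G.Adj j h ∧ G.Adj i h ∧ G.Adj i u ∧ G.Adj u v ∧ G.Adj i v ∧
    W = {i, j, h, u, v}) ∨
  (∃ p : Fin 5 → α, Function.Injective p ∧ (∀ i : Fin 5, G.Adj (p i) (p (i + 1))) ∧
    W = Set.range p)

end

section Aux

variable {α : Type*}

lemma edgeCount_add' (M N : Multiset (Sym2 α)) (v : α) :
    edgeCount (M + N) v = edgeCount M v + edgeCount N v := Multiset.countP_add _ _ _

lemma edgeCount_pos' {M : Multiset (Sym2 α)} {v : α} (h : 0 < edgeCount M v) :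
    ∃ e ∈ M, v ∈ e := by
  simpa [edgeCount, Multiset.countP_pos] using h

lemma edgeCount_pos_of_mem {M : Multiset (Sym2 α)} {v : α} {e : Sym2 α}
    (he : e ∈ M) (hv : v ∈ e) : 0 < edgeCount M v := by
  rw [edgeCount, Multiset.countP_pos]; exact ⟨e, he, hv⟩

open Classical in
lemma edgeCount_sum' {β : Type*} (s : Finset β) (f : β → Multiset (Sym2 α)) (v : α) :
    edgeCount (∑ j ∈ s, f j) v = ∑ j ∈ s, edgeCount (f j) v := by
  classical
  induction s using Finset.induction with
  | empty => simp [edgeCount]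
  | insert _ _ h ih => simp [Finset.sum_insert h, edgeCount_add', ih]

lemma edgeCount_nsmul_single (n : ℕ) (e : Sym2 α) (v : α) :
    edgeCount (n • ({e} : Multiset (Sym2 α))) v = n * (if v ∈ e then 1 else 0) := by
  rw [edgeCount, Multiset.countP_nsmul]
  congr 1
  rw [← Multiset.cons_zero, Multiset.countP_cons]
  simp

lemma card_le_sum_edgeCount [Fintype α] (M : Multiset (Sym2 α)) :
    Multiset.card M ≤ ∑ v : α, edgeCount M v := by
  induction M using Multiset.induction with
  | empty => simp [edgeCount]
  | cons e M ih =>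
    simp only [Multiset.card_cons]
    have h1 : ∀ v, edgeCount (e ::ₘ M) v = edgeCount M v + (if v ∈ e then 1 else 0) :=
      fun v => Multiset.countP_cons _ _ _
    simp only [h1, Finset.sum_add_distrib]
    have : (1 : ℕ) ≤ ∑ v : α, (if v ∈ e then 1 else 0) := by
      obtain ⟨x, hx⟩ : ∃ x, x ∈ e := ⟨e.out.1, Sym2.out_fst_mem e⟩
      calc (1:ℕ) = if x ∈ e then 1 else 0 := by simp [hx]
        _ ≤ _ := Finset.single_le_sum (f := fun v => if v ∈ e then (1:ℕ) else 0)
            (fun _ _ => by positivity) (Finset.mem_univ x)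
    omega

lemma nu_bddAbove [Fintype α] (G : SimpleGraph α) (w : α → ℕ) :
    BddAbove {m | ∃ M : Multiset (Sym2 α), IsWMatching G w M ∧ Multiset.card M = m} := by
  refine ⟨∑ v : α, w v, fun m hm => ?_⟩
  obtain ⟨M, hM, rfl⟩ := hm
  exact (card_le_sum_edgeCount M).trans (Finset.sum_le_sum fun v _ => hM.2 v)

lemma le_nu [Fintype α] {G : SimpleGraph α} {w : α → ℕ} {M : Multiset (Sym2 α)}
    (hM : IsWMatching G w M) : Multiset.card M ≤ nu G w :=
  le_csSup (nu_bddAbove G w) ⟨M, hM, rfl⟩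

lemma zero_isWMatching (G : SimpleGraph α) (w : α → ℕ) : IsWMatching G w 0 :=
  ⟨fun e he => absurd he (Multiset.notMem_zero e), fun v => by simp [edgeCount]⟩

lemma exists_max_matching [Fintype α] (G : SimpleGraph α) (w : α → ℕ) :
    ∃ M : Multiset (Sym2 α), IsWMatching G w M ∧ Multiset.card M = nu G w := by
  have h0 : (0 : ℕ) ∈ {m | ∃ M : Multiset (Sym2 α), IsWMatching G w M ∧ Multiset.card M = m} :=
    ⟨0, zero_isWMatching G w, rfl⟩
  exact Nat.sSup_mem ⟨0, h0⟩ (nu_bddAbove G w)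

lemma exists_cut {β : Type*} [DecidableEq β] (s : Finset β) (f : β → ℕ) (n : ℕ)
    (hn : n ≤ ∑ j ∈ s, f j) :
    ∃ m : β → ℕ, (∀ j, m j ≤ f j) ∧ (∀ j ∉ s, m j = 0) ∧ ∑ j ∈ s, m j = n := by
  induction s using Finset.induction generalizing n with
  | empty =>
    refine ⟨fun _ => 0, fun _ => Nat.zero_le _, fun _ _ => rfl, ?_⟩
    simp at hn ⊢; omega
  | @insert a s ha ih =>
    rw [Finset.sum_insert ha] at hn
    obtain ⟨m, hm1, hm2, hm3⟩ := ih (n - min n (f a)) (by omega)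
    refine ⟨fun j => if j = a then min n (f a) else m j, fun j => ?_, fun j hj => ?_, ?_⟩
    · dsimp only
      by_cases h : j = a
      · subst h; rw [if_pos rfl]; exact min_le_right _ _
      · rw [if_neg h]; exact hm1 j
    · dsimp only
      simp only [Finset.mem_insert, not_or] at hj
      rw [if_neg hj.1]; exact hm2 j hj.2
    · rw [Finset.sum_insert ha]
      have h2 : ∑ j ∈ s, (if j = a then min n (f a) else m j) = ∑ j ∈ s, m j :=
        Finset.sum_congr rfl fun j hj => by
          have : j ≠ a := fun h => ha (h ▸ hj); rw [if_neg this]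
      rw [if_pos rfl, h2, hm3]; omega

lemma card_finsum' {β : Type*} (s : Finset β) (f : β → Multiset (Sym2 α)) :
    Multiset.card (∑ j ∈ s, f j) = ∑ j ∈ s, Multiset.card (f j) := by
  classical
  induction s using Finset.induction with
  | empty => simp
  | insert _ _ h ih => simp [Finset.sum_insert h, ih]

open Classical in
lemma matching_union [Fintype α] (G : SimpleGraph α) (w : α → ℕ) (i : α)
    {M : Multiset (Sym2 α)} (hM : IsWMatching G (delNbr G w i) M)
    (m : α → ℕ) (hm : ∀ j, m j ≠ 0 → G.Adj i j) (hmw : ∀ j, m j ≤ w j)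
    (hmi : ∑ j : α, m j ≤ w i) :
    ∃ M' : Multiset (Sym2 α), IsWMatching G w M' ∧
      Multiset.card M' = Multiset.card M + ∑ j : α, m j := by
  classical
  set E : Multiset (Sym2 α) := ∑ j : α, m j • ({s(i, j)} : Multiset (Sym2 α)) with hE
  have hMi : edgeCount M i = 0 := by
    by_contra h
    obtain ⟨e, heM, hie⟩ := edgeCount_pos' (Nat.pos_of_ne_zero h)
    obtain ⟨j, rfl⟩ := Sym2.mem_iff_exists.mp hie
    have hadj : G.Adj i j := (SimpleGraph.mem_edgeSet G).mp (hM.1 _ heM)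
    have h1 : 0 < edgeCount M j := edgeCount_pos_of_mem heM (Sym2.mem_mk_right i j)
    have h2 := hM.2 j
    rw [delNbr, if_pos hadj] at h2
    omega
  have hEcount : ∀ v, edgeCount E v =
      ∑ j : α, m j * (if v ∈ s(i, j) then 1 else 0) := by
    intro v
    rw [hE, edgeCount_sum']
    exact Finset.sum_congr rfl fun j _ => edgeCount_nsmul_single _ _ _
  have hmii : m i = 0 := by
    by_contra h
    exact (G.loopless.irrefl i) (hm i h)
  have hEi : edgeCount E i = ∑ j : α, m j := by
    rw [hEcount]
    exact Finset.sum_congr rfl fun j _ => by simp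
  have hEv : ∀ v, v ≠ i → edgeCount E v = m v := by
    intro v hv
    rw [hEcount]
    rw [Finset.sum_eq_single v]
    · simp
    · intro b _ hb
      simp only [Sym2.mem_iff]
      have : ¬ (v = i ∨ v = b) := by tauto
      simp [this]
    · simp
  refine ⟨M + E, ⟨?_, ?_⟩, ?_⟩
  · intro e he
    rcases Multiset.mem_add.mp he with h | h
    · exact hM.1 e h
    · rw [hE] at h
      obtain ⟨j, -, hj⟩ := Multiset.mem_sum.mp h
      rcases Nat.eq_zero_or_pos (m j) with h0 | h0
      · simp [h0] at hj
      · have he' : e = s(i, j) := by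
          have h2 := Multiset.mem_of_mem_nsmul hj
          simpa using h2
        rw [he', SimpleGraph.mem_edgeSet]
        exact hm j (by omega)
  · intro v
    rw [edgeCount_add']
    by_cases hv : v = i
    · subst hv
      rw [hMi, hEi]
      omega
    · rw [hEv v hv]
      rcases Nat.eq_zero_or_pos (m v) with h0 | h0
      · have := hM.2 v
        have hd : delNbr G w i v ≤ w v := by
          rw [delNbr]; split <;> omega
        omega
      · have hadj : G.Adj i v := hm v (by omega)
        have := hM.2 v
        rw [delNbr, if_pos hadj] at this
        have := hmw v
        omega
  · rw [Multiset.card_add, hE]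
    congr 1
    rw [card_finsum']
    exact Finset.sum_congr rfl fun j _ => by simp

end Aux

theorem stmt4 {α : Type*} [Fintype α] (G : SimpleGraph α) (w : α → ℕ) (t : ℕ)
    (hw : ∀ i, 0 < w i) (hsat : TSaturating G w t) :
    (∀ i, w i < min (wdeg G w i) (nu G w + 1)) ∧
      (∀ i j, G.Adj i j → (∀ j', G.Adj j j' → j' = i) → 2 ≤ w i) := by
  classical
  obtain ⟨hnu, hsat2⟩ := hsat
  have key : ∀ i, w i < wdeg G w i := by
    intro i
    by_contra h
    push_neg at h
    obtain ⟨M, hM, hcard⟩ := exists_max_matching G (delNbr G w i)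
    obtain ⟨M', hM', hcard'⟩ := matching_union G w i hM
      (fun j => if G.Adj i j then w j else 0)
      (fun j hj => by by_contra hc; simp [hc] at hj)
      (fun j => by by_cases hc : G.Adj i j <;> simp [hc])
      (by rw [← wdeg]; exact h)
    have h1 := le_nu hM'
    have h2 := hsat2 i (hw i)
    rw [hcard', hcard] at h1
    have : ∑ j : α, (if G.Adj i j then w j else 0) = wdeg G w i := rfl
    rw [this] at h1
    omega
  constructor
  · intro i
    rw [lt_min_iff]
    refine ⟨key i, ?_⟩
    have hle : w i ≤ ∑ j : α, (if G.Adj i j then w j else 0) := (key i).le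
    obtain ⟨m, hm1, -, hm3⟩ := exists_cut Finset.univ
      (fun j => if G.Adj i j then w j else 0) (w i) hle
    obtain ⟨M', hM', hcard'⟩ := matching_union G w i (zero_isWMatching G (delNbr G w i)) m
      (fun j hj => by
        have := hm1 j
        by_contra hc; simp [hc] at this; omega)
      (fun j => by have := hm1 j; by_cases hc : G.Adj i j <;> simp [hc] at this <;> omega)
      (by rw [hm3])
    have h1 := le_nu hM'
    rw [hcard'] at h1
    simp only [Multiset.card_zero, zero_add, hm3] at h1
    omega
  · intro i j hadj hleaf
    by_contra h
    push_neg at h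
    have hwi : w i = 1 := by have := hw i; omega
    obtain ⟨M, hM, hcard⟩ := exists_max_matching G (delNbr G w j)
    obtain ⟨M', hM', hcard'⟩ := matching_union G w j hM
      (fun k => if k = i then 1 else 0)
      (fun k hk => by
        have : k = i := by by_contra hc; simp [hc] at hk
        rw [this]; exact hadj.symm)
      (fun k => by by_cases hc : k = i <;> simp [hc, hwi])
      (by have := hw j; simp; omega)
    have h1 := le_nu hM'
    have h2 := hsat2 j (hw j)
    have hdeg : wdeg G w j = 1 := by
      rw [wdeg, Finset.sum_eq_single i]
      · rw [if_pos hadj.symm, hwi]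
      · intro b _ hb
        have : ¬ G.Adj j b := fun hc => hb (hleaf b hc)
        simp [this]
      · simp
    have hsum : ∑ k : α, (if k = i then 1 else 0) = 1 := by simp
    rw [hcard', hcard, hsum] at h1
    omega
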